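/- Let β > 0, K ≥ 1, and u_0(x) = r^{-β} Σ_{s=1}^r |k_s| v_s cos(k_s·x) with |k_s| ≈ 2^{s-1}K and |v_s| ≈ 1. Then c r^{-β} ≤ ‖u_0‖_{Ḃ^{-1}_{∞,∞}} ≤ C r^{-β}, where ‖f‖_{Ḃ^{-1}_{∞,∞}} = sup_{t>0} t^{1/2} ‖e^{tΔ}f‖_{L^∞}, with constants c, C independent of r and K. -/

import Mathlib

/-- Euclidean dot product on `ℝ³`. -/
def dot3 (a b : Fin 3 → ℝ) : ℝ := ∑ i, a i * b i

/-- Euclidean norm on `ℝ³`. -/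
noncomputable def enorm3 (a : Fin 3 → ℝ) : ℝ := Real.sqrt (dot3 a a)

open Real Finset

lemma enorm3_eq (a : Fin 3 → ℝ) :
    enorm3 a = Real.sqrt (a 0 * a 0 + a 1 * a 1 + a 2 * a 2) := by
  simp [enorm3, dot3, Fin.sum_univ_three]

lemma enorm3_nonneg (a : Fin 3 → ℝ) : 0 ≤ enorm3 a := Real.sqrt_nonneg _

lemma abs_snd_le_enorm3 (a : Fin 3 → ℝ) : |a 1| ≤ enorm3 a := by
  rw [enorm3_eq, ← Real.sqrt_sq_eq_abs]
  apply Real.sqrt_le_sqrt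
  nlinarith [sq_nonneg (a 0), sq_nonneg (a 1), sq_nonneg (a 2)]

lemma enorm3_smul (c : ℝ) (a : Fin 3 → ℝ) : enorm3 (c • a) = |c| * enorm3 a := by
  rw [enorm3_eq, enorm3_eq]
  simp only [Pi.smul_apply, smul_eq_mul]
  rw [show c*a 0*(c*a 0)+c*a 1*(c*a 1)+c*a 2*(c*a 2)
      = c^2*(a 0*a 0+a 1*a 1+a 2*a 2) by ring,
    Real.sqrt_mul (sq_nonneg c), Real.sqrt_sq_eq_abs]

lemma enorm3_eq_norm (a : Fin 3 → ℝ) :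
    enorm3 a = ‖(WithLp.equiv 2 (Fin 3 → ℝ)).symm a‖ := by
  rw [EuclideanSpace.norm_eq, enorm3_eq]
  simp [Fin.sum_univ_three, sq]

lemma enorm3_add_le (a b : Fin 3 → ℝ) : enorm3 (a + b) ≤ enorm3 a + enorm3 b := by
  rw [enorm3_eq_norm, enorm3_eq_norm, enorm3_eq_norm]
  rw [show (WithLp.equiv 2 (Fin 3 → ℝ)).symm (a+b)
      = (WithLp.equiv 2 (Fin 3 → ℝ)).symm a + (WithLp.equiv 2 (Fin 3 → ℝ)).symm b from rfl]
  exact norm_add_le _ _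

lemma enorm3_sum_le {ι : Type*} (s : Finset ι) (w : ι → Fin 3 → ℝ) :
    enorm3 (∑ i ∈ s, w i) ≤ ∑ i ∈ s, enorm3 (w i) := by
  classical
  induction s using Finset.induction with
  | empty => simp [enorm3_eq]
  | insert a t h ih =>
    rw [Finset.sum_insert h, Finset.sum_insert h]
    exact le_trans (enorm3_add_le _ _) (by linarith)

lemma step_arctan (x : ℝ) (hx : 0 ≤ x) :
    x * Real.exp (-x^2) ≤ 4 * (Real.arctan (2*x) - Real.arctan x) := by
  have hcont : Continuous fun u : ℝ => 1/(1+u^2) := by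
    apply Continuous.div continuous_const (by continuity)
    intro u; positivity
  have hint : x * (1/(1+(2*x)^2)) ≤ Real.arctan (2*x) - Real.arctan x := by
    rw [← integral_one_div_one_add_sq]
    have h1 : (∫ _ in x..(2*x), (1/(1+(2*x)^2))) = (2*x - x) * (1/(1+(2*x)^2)) := by
      simp [intervalIntegral.integral_const, smul_eq_mul]
    calc x * (1/(1+(2*x)^2)) = ∫ _ in x..(2*x), (1/(1+(2*x)^2)) := by rw [h1]; ring
    _ ≤ ∫ u in x..(2*x), 1/(1+u^2) := by
        apply intervalIntegral.integral_mono_on (by linarith)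
          intervalIntegrable_const (hcont.intervalIntegrable _ _)
        intro u hu
        have h2 : u^2 ≤ (2*x)^2 := by nlinarith [hu.1, hu.2]
        have h3 : (0:ℝ) < 1 + u^2 := by positivity
        exact one_div_le_one_div_of_le h3 (by linarith)
  have hexp : Real.exp (-x^2) ≤ 1/(1+x^2) := by
    have h := Real.add_one_le_exp (x^2)
    rw [Real.exp_neg, one_div]
    exact inv_anti₀ (by positivity) (by linarith)
  have h5 : x * Real.exp (-x^2) ≤ x * (1/(1+x^2)) :=
    mul_le_mul_of_nonneg_left hexp hx
  have h6 : x * (1/(1+x^2)) ≤ 4 * (x * (1/(1+(2*x)^2))) := by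
    rw [mul_one_div, mul_one_div, ← mul_div_assoc,
      div_le_div_iff₀ (by positivity) (by positivity)]
    nlinarith [sq_nonneg x]
  have h7 : 4 * (x * (1/(1+(2*x)^2))) ≤ 4 * (Real.arctan (2*x) - Real.arctan x) :=
    mul_le_mul_of_nonneg_left hint (by norm_num)
  linarith

lemma sum_g_le (a : ℝ) (ha : 0 ≤ a) (n : ℕ) :
    ∑ j ∈ Finset.range n, (2^j * a) * Real.exp (-(2^j * a)^2) ≤ 2 * Real.pi := by
  have key : ∀ j : ℕ, (2^j * a) * Real.exp (-(2^j*a)^2) ≤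
      4 * (Real.arctan (2^(j+1)*a) - Real.arctan (2^j*a)) := by
    intro j
    have h := step_arctan (2^j*a) (by positivity)
    rwa [show 2*(2^j*a) = 2^(j+1)*a by ring] at h
  calc ∑ j ∈ Finset.range n, (2^j*a)*Real.exp (-(2^j*a)^2)
      ≤ ∑ j ∈ Finset.range n, 4*(Real.arctan (2^(j+1)*a) - Real.arctan (2^j*a)) :=
        Finset.sum_le_sum (fun j _ => key j)
    _ = 4 * (Real.arctan (2^n*a) - Real.arctan (2^0*a)) := by
        rw [← Finset.mul_sum, Finset.sum_range_sub (fun j => Real.arctan (2^j*a))]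
    _ ≤ 4 * (Real.pi/2 - 0) := by
        gcongr
        · exact le_of_lt (Real.arctan_lt_pi_div_two _)
        · rw [← Real.arctan_zero]
          exact Real.arctan_strictMono.monotone (by positivity)
    _ = 2 * Real.pi := by ring


/-- The negative-order Besov norm
`‖u₀‖_{Ḃ^{-1}_{∞,∞}} = sup_{t>0} t^{1/2} ‖e^{tΔ}u₀‖_{L^∞}` of the lacunary initial
data `u₀ = r^{-β} ∑_{s=1}^r |k_s| v_s cos(k_s·x)`, with `k_s = (0,1,0)+(0,0,2^(s-1)K)`
(so `|k_s| ≈ 2^(s-1)K`) and `v_s = (0,1/2,-1/(2·2^(s-1)K))` (so `|v_s| ≈ 1`), is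
comparable to `r^{-β}`: `c r^{-β} ≤ ‖u₀‖_{Ḃ^{-1}_{∞,∞}} ≤ C r^{-β}` with `c, C > 0`
independent of `r` and `K`.  Here `e^{tΔ}u₀` is the mode-wise heat flow
`r^{-β} ∑_s |k_s| e^{-|k_s|²t} v_s cos(k_s·x)`. -/
theorem stmt19 (β : ℝ) (hβ : 0 < β) :
    ∃ c C : ℝ, 0 < c ∧ 0 < C ∧ ∀ K : ℝ, 1 ≤ K → ∀ r : ℕ, 1 ≤ r →
      ∀ k v : ℕ → Fin 3 → ℝ,
      (∀ s, k s = ![0, 1, 0] + ![0, 0, (2:ℝ)^(s-1) * K]) →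
      (∀ s, v s = ![0, 1/2, -(1 / (2 * ((2:ℝ)^(s-1) * K)))]) →
      ∀ F : ℝ → (Fin 3 → ℝ) → Fin 3 → ℝ,
      (F = fun t x => (r:ℝ) ^ (-β) •
        ∑ s ∈ Finset.Icc 1 r,
          (enorm3 (k s) * Real.exp (-(enorm3 (k s))^2 * t) * Real.cos (dot3 (k s) x)) • v s) →
      c * (r:ℝ) ^ (-β) ≤
          sSup ((fun t : ℝ => t ^ ((1:ℝ)/2) *
              sSup (Set.range fun x : Fin 3 → ℝ => enorm3 (F t x))) '' Set.Ioi (0:ℝ)) ∧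
        sSup ((fun t : ℝ => t ^ ((1:ℝ)/2) *
              sSup (Set.range fun x : Fin 3 → ℝ => enorm3 (F t x))) '' Set.Ioi (0:ℝ))
          ≤ C * (r:ℝ) ^ (-β) := by
  refine ⟨1/6, 4*Real.pi, by norm_num, by positivity, fun K hK r hr k v hk hv F hF => ?_⟩
  have hK0 : (0:ℝ) < K := lt_of_lt_of_le one_pos hK
  have hr0 : (0:ℝ) < (r:ℝ) := by exact_mod_cast hr
  set R : ℝ := (r:ℝ)^(-β) with hRdef
  have hRpos : 0 < R := Real.rpow_pos_of_pos hr0 _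
  have hFa : ∀ t x, F t x = R •
      ∑ s ∈ Finset.Icc 1 r,
        (enorm3 (k s) * Real.exp (-(enorm3 (k s))^2 * t) * Real.cos (dot3 (k s) x)) • v s :=
    fun t x => by rw [hF]
  obtain ⟨L, hLdef⟩ : ∃ L : ℕ → ℝ, ∀ s, L s = 2^(s-1)*K := ⟨_, fun _ => rfl⟩
  have hL1 : ∀ s, 1 ≤ L s := by
    intro s; rw [hLdef]
    calc (1:ℝ) = 1 * 1 := by ring
    _ ≤ 2^(s-1) * K := mul_le_mul (one_le_pow₀ (by norm_num)) hK one_pos.le (by positivity)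
  have hL0 : ∀ s, 0 < L s := fun s => lt_of_lt_of_le one_pos (hL1 s)
  have hksq : ∀ s, dot3 (k s) (k s) = 1 + L s ^ 2 := by
    intro s
    rw [hLdef]
    simp [dot3, hk s, Fin.sum_univ_three]
    ring
  have hm : ∀ s, enorm3 (k s) = Real.sqrt (1 + L s^2) := by
    intro s; rw [enorm3, hksq]
  have hm0 : ∀ s, 0 < enorm3 (k s) := by
    intro s; rw [hm]; positivity
  have hmsq : ∀ s, (enorm3 (k s))^2 = 1 + L s^2 := by
    intro s; rw [hm]; exact Real.sq_sqrt (by positivity)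
  have hmub : ∀ s, enorm3 (k s) ≤ 2 * L s := by
    intro s
    rw [hm, show (2*L s) = Real.sqrt ((2*L s)^2) from
      (Real.sqrt_sq (by linarith [hL0 s] : (0:ℝ) ≤ 2*L s)).symm]
    apply Real.sqrt_le_sqrt
    nlinarith [hL1 s]
  have hv1 : ∀ s, v s 1 = 1/2 := by intro s; simp [hv s]
  have hvn : ∀ s, enorm3 (v s) ≤ 1 := by
    intro s
    have h1 := hL1 s
    rw [hLdef] at h1
    have hq : 1/(2*((2:ℝ)^(s-1)*K)) ≤ 1/2 :=
      one_div_le_one_div_of_le (by norm_num) (by linarith)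
    have hq0 : (0:ℝ) ≤ 1/(2*((2:ℝ)^(s-1)*K)) := by positivity
    rw [hv s, enorm3_eq]
    apply Real.sqrt_le_one.mpr
    simp only [Matrix.cons_val_zero, Matrix.cons_val_one, Matrix.head_cons,
      Matrix.cons_val_two, Matrix.tail_cons]
    nlinarith [hq, hq0]
  -- pointwise bound
  have hpoint : ∀ t : ℝ, 0 < t → ∀ x : Fin 3 → ℝ,
      enorm3 (F t x) ≤ R * (4*Real.pi/Real.sqrt t) := by
    intro t ht x
    have hst : 0 < Real.sqrt t := Real.sqrt_pos.mpr ht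
    rw [hFa, enorm3_smul, abs_of_pos hRpos]
    apply mul_le_mul_of_nonneg_left _ hRpos.le
    calc enorm3 (∑ s ∈ Finset.Icc 1 r,
          (enorm3 (k s) * Real.exp (-(enorm3 (k s))^2 * t) * Real.cos (dot3 (k s) x)) • v s)
        ≤ ∑ s ∈ Finset.Icc 1 r, enorm3
          ((enorm3 (k s) * Real.exp (-(enorm3 (k s))^2 * t) * Real.cos (dot3 (k s) x)) • v s) :=
        enorm3_sum_le _ _
      _ ≤ ∑ s ∈ Finset.Icc 1 r, (2/Real.sqrt t) *
          ((2^(s-1)*(K*Real.sqrt t)) * Real.exp (-(2^(s-1)*(K*Real.sqrt t))^2)) := by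
        apply Finset.sum_le_sum
        intro s _
        rw [enorm3_smul]
        have hE : 0 < Real.exp (-(enorm3 (k s))^2*t) := Real.exp_pos _
        have habs : |enorm3 (k s) * Real.exp (-(enorm3 (k s))^2*t) * Real.cos (dot3 (k s) x)|
            ≤ enorm3 (k s) * Real.exp (-(enorm3 (k s))^2*t) := by
          rw [abs_mul, abs_mul, abs_of_nonneg (hm0 s).le, abs_of_pos hE]
          calc enorm3 (k s) * Real.exp (-(enorm3 (k s))^2*t) * |Real.cos (dot3 (k s) x)|
              ≤ enorm3 (k s) * Real.exp (-(enorm3 (k s))^2*t) * 1 :=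
                mul_le_mul_of_nonneg_left (Real.abs_cos_le_one _)
                  (mul_nonneg (hm0 s).le hE.le)
            _ = enorm3 (k s) * Real.exp (-(enorm3 (k s))^2*t) := mul_one _
        have h1 : |enorm3 (k s) * Real.exp (-(enorm3 (k s))^2*t) * Real.cos (dot3 (k s) x)|
              * enorm3 (v s)
            ≤ enorm3 (k s) * Real.exp (-(enorm3 (k s))^2*t) := by
          calc _ ≤ (enorm3 (k s) * Real.exp (-(enorm3 (k s))^2*t)) * 1 :=
              mul_le_mul habs (hvn s) (enorm3_nonneg _) (mul_nonneg (hm0 s).le hE.le)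
            _ = _ := mul_one _
        have h2 : enorm3 (k s) * Real.exp (-(enorm3 (k s))^2*t)
            ≤ (2*L s) * Real.exp (-(L s)^2*t) := by
          apply mul_le_mul (hmub s) (Real.exp_le_exp.mpr ?_) hE.le (by linarith [hL0 s])
          rw [hmsq s]
          nlinarith [ht.le]
        have h3 : (2/Real.sqrt t) *
              ((2^(s-1)*(K*Real.sqrt t)) * Real.exp (-(2^(s-1)*(K*Real.sqrt t))^2))
            = (2*L s) * Real.exp (-(L s)^2*t) := by
          rw [show (2:ℝ)^(s-1)*(K*Real.sqrt t) = L s * Real.sqrt t from by rw [hLdef]; ring]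
          rw [show (-(L s*Real.sqrt t)^2) = -(L s)^2*t from by
            rw [mul_pow, Real.sq_sqrt ht.le]; ring]
          rw [div_mul_eq_mul_div, div_eq_iff (ne_of_gt hst)]
          ring
        rw [h3]
        exact le_trans h1 h2
      _ = (2/Real.sqrt t) * ∑ j ∈ Finset.range r,
          ((2^j*(K*Real.sqrt t)) * Real.exp (-(2^j*(K*Real.sqrt t))^2)) := by
        rw [← Finset.mul_sum, ← Finset.Ico_add_one_right_eq_Icc, Finset.sum_Ico_eq_sum_range]
        congr 1
        refine Finset.sum_congr (by norm_num) fun i _ => ?_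
        rw [show 1+i-1 = i from by omega]
      _ ≤ (2/Real.sqrt t) * (2*Real.pi) := by
        apply mul_le_mul_of_nonneg_left (sum_g_le (K*Real.sqrt t) (by positivity) r)
          (by positivity)
      _ = 4*Real.pi/Real.sqrt t := by
        field_simp
        ring
  -- upper bound for every element of the image
  have hub : ∀ z ∈ ((fun t : ℝ => t ^ ((1:ℝ)/2) *
      sSup (Set.range fun x : Fin 3 → ℝ => enorm3 (F t x))) '' Set.Ioi (0:ℝ)),
      z ≤ 4*Real.pi * R := by
    rintro z ⟨t, ht, rfl⟩
    rw [Set.mem_Ioi] at ht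
    have hst : 0 < Real.sqrt t := Real.sqrt_pos.mpr ht
    have hS : sSup (Set.range fun x : Fin 3 → ℝ => enorm3 (F t x))
        ≤ R * (4*Real.pi/Real.sqrt t) := by
      apply Real.sSup_le
      · rintro z ⟨x, rfl⟩
        exact hpoint t ht x
      · exact le_of_lt (mul_pos hRpos (div_pos (by positivity) hst))
    beta_reduce
    rw [← Real.sqrt_eq_rpow]
    calc Real.sqrt t * sSup (Set.range fun x : Fin 3 → ℝ => enorm3 (F t x))
        ≤ Real.sqrt t * (R * (4*Real.pi/Real.sqrt t)) :=
          mul_le_mul_of_nonneg_left hS hst.le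
      _ = 4*Real.pi * R := by
          field_simp
  constructor
  · -- lower bound
    obtain ⟨t₀, ht₀⟩ : ∃ t₀ : ℝ, t₀ = 1/(1+K^2) := ⟨_, rfl⟩
    have ht₀pos : 0 < t₀ := by rw [ht₀]; positivity
    have hbdd : BddAbove ((fun t : ℝ => t ^ ((1:ℝ)/2) *
        sSup (Set.range fun x : Fin 3 → ℝ => enorm3 (F t x))) '' Set.Ioi (0:ℝ)) :=
      ⟨4*Real.pi * R, fun z hz => hub z hz⟩
    have hmem : t₀ ^ ((1:ℝ)/2) *
        sSup (Set.range fun x : Fin 3 → ℝ => enorm3 (F t₀ x))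
        ∈ ((fun t : ℝ => t ^ ((1:ℝ)/2) *
          sSup (Set.range fun x : Fin 3 → ℝ => enorm3 (F t x))) '' Set.Ioi (0:ℝ)) :=
      ⟨t₀, Set.mem_Ioi.mpr ht₀pos, rfl⟩
    refine le_trans ?_ (le_csSup hbdd hmem)
    have hbdd2 : BddAbove (Set.range fun x : Fin 3 → ℝ => enorm3 (F t₀ x)) :=
      ⟨R * (4*Real.pi/Real.sqrt t₀), by rintro z ⟨x, rfl⟩; exact hpoint t₀ ht₀pos x⟩
    have hL1K : L 1 = K := by rw [hLdef]; norm_num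
    have hexp1 : -(enorm3 (k 1))^2 * t₀ = -1 := by
      rw [hmsq 1, hL1K, ht₀]
      field_simp
    have hdot0 : ∀ s, dot3 (k s) (0 : Fin 3 → ℝ) = 0 := by
      intro s; simp [dot3]
    have hval : F t₀ (0 : Fin 3 → ℝ) 1
        = R * ∑ s ∈ Finset.Icc 1 r,
            (enorm3 (k s) * Real.exp (-(enorm3 (k s))^2 * t₀)) * (1/2) := by
      rw [hFa]
      simp only [Pi.smul_apply, smul_eq_mul, Finset.sum_apply]
      congr 1
      refine Finset.sum_congr rfl fun s _ => ?_
      rw [hdot0 s, Real.cos_zero, hv1 s]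
      ring
    have hsum : (enorm3 (k 1) * Real.exp (-(enorm3 (k 1))^2 * t₀)) * (1/2)
        ≤ ∑ s ∈ Finset.Icc 1 r,
            (enorm3 (k s) * Real.exp (-(enorm3 (k s))^2 * t₀)) * (1/2) :=
      Finset.single_le_sum
        (f := fun s => (enorm3 (k s) * Real.exp (-(enorm3 (k s))^2 * t₀)) * (1/2))
        (fun s _ => mul_nonneg (mul_nonneg (hm0 s).le (Real.exp_pos _).le) (by norm_num))
        (Finset.mem_Icc.mpr ⟨le_refl 1, hr⟩)
    have e1 : F t₀ (0 : Fin 3 → ℝ) 1 ≤ enorm3 (F t₀ (0 : Fin 3 → ℝ)) :=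
      le_trans (le_abs_self _) (abs_snd_le_enorm3 _)
    have e2 : R * ((enorm3 (k 1) * Real.exp (-1)) * (1/2)) ≤ F t₀ (0 : Fin 3 → ℝ) 1 := by
      rw [hval]
      apply mul_le_mul_of_nonneg_left _ hRpos.le
      rw [← hexp1]
      exact hsum
    have e3 : R * ((enorm3 (k 1) * Real.exp (-1)) * (1/2))
        ≤ sSup (Set.range fun x : Fin 3 → ℝ => enorm3 (F t₀ x)) :=
      le_trans (le_trans e2 e1) (le_csSup hbdd2 ⟨(0 : Fin 3 → ℝ), rfl⟩)
    have hprod : Real.sqrt t₀ * enorm3 (k 1) = 1 := by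
      rw [hm 1, hL1K, ht₀, ← Real.sqrt_mul (by positivity)]
      rw [show 1/(1+K^2) * (1+K^2) = 1 from by field_simp]
      exact Real.sqrt_one
    have e4 : Real.sqrt t₀ * (R * ((enorm3 (k 1) * Real.exp (-1)) * (1/2)))
        ≤ Real.sqrt t₀ * sSup (Set.range fun x : Fin 3 → ℝ => enorm3 (F t₀ x)) :=
      mul_le_mul_of_nonneg_left e3 (Real.sqrt_nonneg _)
    have e5 : Real.sqrt t₀ * (R * ((enorm3 (k 1) * Real.exp (-1)) * (1/2)))
        = R * (Real.exp (-1) * (1/2)) := by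
      rw [show Real.sqrt t₀ * (R * ((enorm3 (k 1) * Real.exp (-1)) * (1/2)))
        = (Real.sqrt t₀ * enorm3 (k 1)) * (R * (Real.exp (-1) * (1/2))) from by ring,
        hprod, one_mul]
    have e6 : (1/6) * R ≤ R * (Real.exp (-1) * (1/2)) := by
      have h9 : (1:ℝ)/3 ≤ Real.exp (-1) := by
        rw [Real.exp_neg, one_div]
        have hd := Real.exp_one_lt_d9
        exact inv_anti₀ (Real.exp_pos 1) (by linarith)
      nlinarith [mul_le_mul_of_nonneg_left h9 hRpos.le]
    rw [← Real.sqrt_eq_rpow]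
    linarith [e4, e5.symm.le, e5.le]
  · exact Real.sSup_le hub (by positivity)
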